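/- Fix ξ ∈ (0,1), L > 0, K > 0, and let p* ∈ (0,1) be the unique stable solution of p* = exp{-Lξ/(ξ + p*(1-ξ)) - K} (the q = 1 fixed point). If L ≤ 1 + p*(1-ξ)/ξ, then the peak AoI A_p(q) = 1/ξ + 2/(qp(q)) - 1, where p(q) is the stable solution of p = exp{-Lqξ/(ξ + pq(1-ξ)) - K}, is minimized over q ∈ (0,1] at q = 1, with value 1/ξ + 2/p* - 1. -/

import Mathlib

open Real Set

theorem stmt18 (L K ξ pstar : ℝ) (hξ : ξ ∈ Ioo (0:ℝ) 1) (hL : 0 < L) (hK : 0 < K)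
    (hps : pstar ∈ Ioo (0:ℝ) 1)
    (hfix : pstar = Real.exp (-(L * ξ) / (ξ + pstar * (1 - ξ)) - K))
    (hsmall : L ≤ 1 + pstar * (1 - ξ) / ξ) :
    (∀ q p : ℝ, q ∈ Ioc (0:ℝ) 1 → p ∈ Ioc (0:ℝ) 1 →
      p = Real.exp (-(L * q * ξ) / (ξ + p * q * (1 - ξ)) - K) →
      1 / ξ + 2 / pstar - 1 ≤ 1 / ξ + 2 / (q * p) - 1) ∧
    pstar = Real.exp (-(L * 1 * ξ) / (ξ + pstar * 1 * (1 - ξ)) - K) ∧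
    1 / ξ + 2 / (1 * pstar) - 1 = 1 / ξ + 2 / pstar - 1 := by
  obtain ⟨hξ0, hξ1⟩ := hξ
  obtain ⟨hps0, hps1⟩ := hps
  have h1ξ : (0:ℝ) < 1 - ξ := by linarith
  have hsp : 0 < ξ + pstar * (1 - ξ) := by nlinarith
  have hLξ : L * ξ ≤ ξ + pstar * (1 - ξ) := by
    have := mul_le_mul_of_nonneg_right hsmall hξ0.le
    calc L * ξ ≤ (1 + pstar * (1 - ξ) / ξ) * ξ := this
      _ = ξ + pstar * (1 - ξ) := by field_simp
  refine ⟨?_, by simpa using hfix, by rw [one_mul]⟩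
  intro q p hq hp hpfix
  have hq0 := hq.1
  have hu : 0 < q * p := mul_pos hq0 hp.1
  have hle : q * p ≤ pstar := by
    by_contra hcon
    push_neg at hcon
    set u := q * p with hudef
    have hsu : 0 < ξ + u * (1 - ξ) := by nlinarith
    have hspu : ξ + pstar * (1 - ξ) ≤ ξ + u * (1 - ξ) := by nlinarith
    -- log of fixed point equations
    have hlp : Real.log pstar = -(L * ξ) / (ξ + pstar * (1 - ξ)) - K := by
      nth_rewrite 1 [hfix]
      rw [Real.log_exp]
    have hlq : Real.log p = -(L * q * ξ) / (ξ + u * (1 - ξ)) - K := by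
      rw [hpfix, Real.log_exp]
      have : ξ + p * q * (1 - ξ) = ξ + u * (1 - ξ) := by rw [hudef]; ring
      rw [this]
    have hlu : Real.log u = Real.log q + Real.log p := Real.log_mul hq0.ne' hp.1.ne'
    -- c = L*ξ/(ξ+u(1-ξ)) ≤ 1
    set c := L * ξ / (ξ + u * (1 - ξ)) with hcdef
    have hc0 : 0 < c := div_pos (mul_pos hL hξ0) hsu
    have hc1 : c ≤ 1 := by
      rw [hcdef, div_le_one hsu]; linarith
    have hexp : -(L * q * ξ) / (ξ + u * (1 - ξ)) = -(c * q) := by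
      rw [hcdef]; ring
    -- log q ≤ q - 1 ≤ c*(q-1)
    have hlogq : Real.log q ≤ q - 1 := Real.log_le_sub_one_of_pos hq0
    have hq1 : q ≤ 1 := hq.2
    have hstep : Real.log u ≤ -c - K := by
      rw [hlu, hlq, hexp]
      nlinarith [mul_le_mul_of_nonneg_left (show q - 1 ≤ 0 by linarith) hc0.le]
    -- log u - log pstar ≥ (u - pstar)/u
    have hlow : (u - pstar) / u ≤ Real.log u - Real.log pstar := by
      have h := Real.log_le_sub_one_of_pos (show 0 < pstar / u from div_pos hps0 hu)
      rw [Real.log_div hps0.ne' hu.ne'] at h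
      have : pstar / u - 1 = -((u - pstar) / u) := by field_simp; ring
      rw [this] at h
      linarith
    -- the contradiction
    have hcp : Real.log u - Real.log pstar ≤ L * ξ / (ξ + pstar * (1 - ξ)) - c := by
      rw [hlp]; rw [neg_div] at *
      linarith [hstep]
    have hkey : L * ξ / (ξ + pstar * (1 - ξ)) - c < (u - pstar) / u := by
      rw [hcdef, div_sub_div _ _ hsp.ne' hsu.ne', div_lt_div_iff₀ (mul_pos hsp hsu) hu]
      have hfact : L * ξ * (ξ + u * (1 - ξ)) - (ξ + pstar * (1 - ξ)) * (L * ξ)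
          = L * ξ * (1 - ξ) * (u - pstar) := by ring
      nlinarith [mul_pos hsp hξ0, mul_le_mul_of_nonneg_right hLξ
        (mul_pos hu h1ξ).le, mul_pos (show 0 < u - pstar by linarith) (mul_pos hsp hξ0)]
    linarith
  have h2 : 2 / pstar ≤ 2 / (q * p) := by
    apply div_le_div_of_nonneg_left (by norm_num) hu hle
  linarith
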